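/- arXiv:1507.04951 — 6 statements merged into one kernel-verified Lean document; each statement's English description precedes it below -/
import Mathlib

section
/- For every integer m ≥ 1 and every real number y, one has ∑_{a=0}^{m-1} C(m-1,a) · ∫_0^y x^{2a} (y-x)^{2(m-a)-1} / ((a+1)! · (m-a)!) dx = y^{2m} / (m+1)!. -/
open intervalIntegral Finset

/-- Beta-type integral for natural powers. -/
lemma beta_nat (y : ℝ) (p : ℕ) : ∀ q : ℕ,
    ∫ x in (0:ℝ)..y, x ^ p * (y - x) ^ q =
      ((p.factorial : ℝ) * q.factorial / (p + q + 1).factorial) * y ^ (p + q + 1) := by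
  induction p with
  | zero =>
    intro q
    simp only [pow_zero, one_mul]
    rw [intervalIntegral.integral_comp_sub_left (fun x => x ^ q) y]
    simp only [sub_zero, sub_self]
    rw [integral_pow]
    have h1 : ((q + 1).factorial : ℝ) = (q + 1) * q.factorial := by
      rw [Nat.factorial_succ]; push_cast; ring
    simp only [Nat.factorial_zero, zero_add]
    rw [h1]
    have hq : ((q:ℝ) + 1) ≠ 0 := by positivity
    have hf : (q.factorial : ℝ) ≠ 0 := by positivity
    field_simp
    ring
  | succ p ih =>
    intro q
    -- derivative identity
    have hF : ∀ x : ℝ, HasDerivAt (fun x : ℝ => x ^ (p + 1) * (y - x) ^ (q + 1))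
        ((p + 1 : ℝ) * x ^ p * (y - x) ^ (q + 1)
          - (q + 1 : ℝ) * (x ^ (p + 1) * (y - x) ^ q)) x := by
      intro x
      have h1 : HasDerivAt (fun x : ℝ => x ^ (p + 1)) ((p + 1 : ℝ) * x ^ p) x := by
        simpa using hasDerivAt_pow (p + 1) x
      have h2 : HasDerivAt (fun x : ℝ => (y - x) ^ (q + 1))
          (-((q + 1 : ℝ) * (y - x) ^ q)) x := by
        have := ((hasDerivAt_id x).const_sub y).fun_pow (q + 1)
        simpa using this
      have := h1.fun_mul h2
      exact this.congr_deriv (by ring)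
    have hint : ∀ (r s : ℕ), IntervalIntegrable (fun x : ℝ => x ^ r * (y - x) ^ s)
        MeasureTheory.volume 0 y := by
      intro r s
      exact (Continuous.mul (continuous_pow r)
        ((continuous_const.sub continuous_id).pow s)).intervalIntegrable 0 y
    have h0 : (∫ x in (0:ℝ)..y, ((p + 1 : ℝ) * x ^ p * (y - x) ^ (q + 1)
          - (q + 1 : ℝ) * (x ^ (p + 1) * (y - x) ^ q))) = 0 := by
      rw [intervalIntegral.integral_eq_sub_of_hasDerivAt (fun x _ => hF x)]
      · simp
      · apply Continuous.intervalIntegrable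
        continuity
    have hsplit : (p + 1 : ℝ) * ∫ x in (0:ℝ)..y, x ^ p * (y - x) ^ (q + 1)
        = (q + 1 : ℝ) * ∫ x in (0:ℝ)..y, x ^ (p + 1) * (y - x) ^ q := by
      have := h0
      rw [intervalIntegral.integral_sub] at this
      · rw [intervalIntegral.integral_const_mul] at this
        have h2 : (∫ x in (0:ℝ)..y, (p + 1 : ℝ) * x ^ p * (y - x) ^ (q + 1))
            = (p + 1 : ℝ) * ∫ x in (0:ℝ)..y, x ^ p * (y - x) ^ (q + 1) := by
          rw [← intervalIntegral.integral_const_mul]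
          congr 1; ext x; ring
        rw [h2] at this
        linarith
      · apply Continuous.intervalIntegrable; continuity
      · apply Continuous.intervalIntegrable; continuity
    have hq : ((q:ℝ) + 1) ≠ 0 := by positivity
    have key : (∫ x in (0:ℝ)..y, x ^ (p + 1) * (y - x) ^ q)
        = (p + 1 : ℝ) / (q + 1 : ℝ) * ∫ x in (0:ℝ)..y, x ^ p * (y - x) ^ (q + 1) := by
      field_simp
      linarith [hsplit]
    rw [key, ih (q + 1)]
    have e1 : p + (q + 1) + 1 = p + 1 + q + 1 := by omega
    rw [e1]
    have h2 : ((q + 1).factorial : ℝ) = (q + 1) * q.factorial := by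
      rw [Nat.factorial_succ]; push_cast; ring
    have h3 : ((p + 1).factorial : ℝ) = (p + 1) * p.factorial := by
      rw [Nat.factorial_succ]; push_cast; ring
    rw [h2, h3]
    have hfq : (q.factorial : ℝ) ≠ 0 := by positivity
    have hft : (((p + 1 + q + 1).factorial : ℝ)) ≠ 0 := by positivity
    field_simp

/-- Catalan number factorial identity. -/
lemma cat_fact (n : ℕ) : (catalan n) * n.factorial * (n + 1).factorial = (2 * n).factorial := by
  have h1 : (n + 1) * catalan n = Nat.centralBinom n := succ_mul_catalan_eq_centralBinom n
  have h2 : (2 * n).choose n * n.factorial * (2 * n - n).factorial = (2 * n).factorial :=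
    Nat.choose_mul_factorial_mul_factorial (by omega)
  have h3 : 2 * n - n = n := by omega
  rw [h3] at h2
  have h4 : Nat.centralBinom n = (2 * n).choose n := rfl
  calc catalan n * n.factorial * (n + 1).factorial
      = (n + 1) * catalan n * n.factorial * n.factorial := by
        rw [Nat.factorial_succ]; ring
    _ = (2 * n).choose n * n.factorial * n.factorial := by rw [h1, h4]
    _ = (2 * n).factorial := h2

lemma cat_fact_real (n : ℕ) :
    (catalan n : ℝ) * n.factorial * (n + 1).factorial = (2 * n).factorial := by
  exact_mod_cast congrArg (fun k : ℕ => (k : ℝ)) (cat_fact n)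

/-- Catalan convolution with weights. -/
lemma key1 (n : ℕ) :
    2 * ∑ a ∈ range (n + 1), (((n - a : ℕ) : ℝ) + 1) * catalan a * catalan (n - a)
      = ((n : ℝ) + 2) * catalan (n + 1) := by
  have hcat : (catalan (n + 1) : ℝ) = ∑ a ∈ range (n + 1), (catalan a : ℝ) * catalan (n - a) := by
    rw [catalan_succ]
    push_cast [← Fin.sum_univ_eq_sum_range]
    norm_num
  have hrefl : ∑ a ∈ range (n + 1), (((n - a : ℕ) : ℝ) + 1) * catalan a * catalan (n - a)
      = ∑ a ∈ range (n + 1), (((a : ℕ) : ℝ) + 1) * catalan a * catalan (n - a) := by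
    rw [← Finset.sum_range_reflect (fun a => (((n - a : ℕ) : ℝ) + 1) * catalan a * catalan (n - a))]
    apply Finset.sum_congr rfl
    intro j hj
    have hjn : j ≤ n := by simpa [Nat.lt_succ_iff] using Finset.mem_range.mp hj
    have h1 : n + 1 - 1 - j = n - j := by omega
    have h2 : n - (n - j) = j := Nat.sub_sub_self hjn
    rw [h1, h2]
    ring
  have : 2 * ∑ a ∈ range (n + 1), (((n - a : ℕ) : ℝ) + 1) * catalan a * catalan (n - a)
      = ∑ a ∈ range (n + 1), ((((n - a : ℕ) : ℝ) + 1) + (((a : ℕ) : ℝ) + 1))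
          * catalan a * catalan (n - a) := by
    rw [two_mul]
    nth_rewrite 2 [hrefl]
    rw [← Finset.sum_add_distrib]
    apply Finset.sum_congr rfl
    intro a _
    ring
  rw [this, hcat, Finset.mul_sum]
  apply Finset.sum_congr rfl
  intro a ha
  have han : a ≤ n := by simpa [Nat.lt_succ_iff] using Finset.mem_range.mp ha
  have : ((n - a : ℕ) : ℝ) = (n : ℝ) - a := by
    push_cast [Nat.cast_sub han]; ring
  rw [this]
  ring

/-- Part (1) of Proposition `id`:
`∑_{a=0}^{m-1} C(m-1,a) ∫_0^y x^{2a}(y-x)^{2(m-a)-1}/((a+1)!(m-a)!) dx = y^{2m}/(m+1)!`. -/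
theorem stmt_0 (m : ℕ) (hm : 1 ≤ m) (y : ℝ) :
    ∑ a ∈ Finset.range m, (Nat.choose (m - 1) a : ℝ) *
      ∫ x in (0:ℝ)..y,
        x ^ (2 * a) * (y - x) ^ (2 * (m - a) - 1) /
          ((Nat.factorial (a + 1) : ℝ) * (Nat.factorial (m - a) : ℝ)) =
    y ^ (2 * m) / (Nat.factorial (m + 1) : ℝ) := by
  -- Step 1: rewrite each term
  have hterm : ∀ a ∈ Finset.range m,
      (Nat.choose (m - 1) a : ℝ) *
        ∫ x in (0:ℝ)..y,
          x ^ (2 * a) * (y - x) ^ (2 * (m - a) - 1) /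
            ((Nat.factorial (a + 1) : ℝ) * (Nat.factorial (m - a) : ℝ))
      = (((m - 1).factorial : ℝ) * catalan a * ((((m - a : ℕ) : ℝ) + 1) * catalan (m - a))
          / (2 * (2 * m).factorial)) * y ^ (2 * m) := by
    intro a ha
    have ham : a < m := Finset.mem_range.mp ha
    set b := m - a with hb
    have hb1 : 1 ≤ b := by omega
    have hInt : (∫ x in (0:ℝ)..y,
        x ^ (2 * a) * (y - x) ^ (2 * b - 1) /
          ((Nat.factorial (a + 1) : ℝ) * (Nat.factorial b : ℝ)))
        = (((2 * a).factorial : ℝ) * (2 * b - 1).factorial / (2 * m).factorial) * y ^ (2 * m)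
          / ((Nat.factorial (a + 1) : ℝ) * (Nat.factorial b : ℝ)) := by
      rw [intervalIntegral.integral_div, beta_nat y (2 * a) (2 * b - 1)]
      have : 2 * a + (2 * b - 1) + 1 = 2 * m := by omega
      rw [this]
    rw [hInt]
    -- now a purely algebraic identity
    have hchoose : ((m - 1).choose a : ℝ) * (a.factorial : ℝ) * ((b - 1).factorial : ℝ)
        = ((m - 1).factorial : ℝ) := by
      have h := Nat.choose_mul_factorial_mul_factorial (show a ≤ m - 1 by omega)
      have h2 : m - 1 - a = b - 1 := by omega
      rw [h2] at h
      exact_mod_cast congrArg (fun k : ℕ => (k : ℝ)) h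
    have hca : (catalan a : ℝ) * a.factorial * (a + 1).factorial = (2 * a).factorial :=
      cat_fact_real a
    have hcb : (catalan b : ℝ) * b.factorial * (b + 1).factorial = (2 * b).factorial :=
      cat_fact_real b
    have h2b : ((2 * b).factorial : ℝ) = (2 * b) * ((2 * b - 1).factorial : ℝ) := by
      have : 2 * b = (2 * b - 1) + 1 := by omega
      rw [this, Nat.factorial_succ]
      push_cast
      have : ((2 * b - 1 : ℕ) : ℝ) = 2 * (b : ℝ) - 1 := by
        have hc : ((2 * b - 1 : ℕ) : ℝ) = ((2 * b : ℕ) : ℝ) - 1 := by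
          rw [Nat.cast_sub (by omega)]; push_cast; ring
        rw [hc]; push_cast; ring
      rw [this]; ring
    have hbfac : (b.factorial : ℝ) = b * ((b - 1).factorial : ℝ) := by
      have : b = (b - 1) + 1 := by omega
      nth_rewrite 1 [this]
      rw [Nat.factorial_succ]
      push_cast [Nat.cast_sub (show 1 ≤ b from hb1)]
      ring
    have hbsucc : ((b + 1).factorial : ℝ) = (b + 1) * (b.factorial : ℝ) := by
      rw [Nat.factorial_succ]; push_cast; ring
    have hasucc : ((a + 1).factorial : ℝ) = (a + 1) * (a.factorial : ℝ) := by
      rw [Nat.factorial_succ]; push_cast; ring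
    -- nonzero facts
    have n1 : (a.factorial : ℝ) ≠ 0 := by positivity
    have n2 : ((b - 1).factorial : ℝ) ≠ 0 := by positivity
    have n3 : ((a + 1).factorial : ℝ) ≠ 0 := by positivity
    have n4 : (b.factorial : ℝ) ≠ 0 := by positivity
    have n5 : ((2 * m).factorial : ℝ) ≠ 0 := by positivity
    have n6 : (b : ℝ) ≠ 0 := by positivity
    have e1 : ((2 * a).factorial : ℝ) = (catalan a : ℝ) * a.factorial * (a + 1).factorial :=
      hca.symm
    have e2 : ((2 * b - 1).factorial : ℝ)
        = (catalan b : ℝ) * b.factorial * (b + 1).factorial / (2 * b) := by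
      rw [← hcb] at h2b
      field_simp at h2b ⊢
      linarith [h2b]
    have hch : ((m - 1).choose a : ℝ)
        = ((m - 1).factorial : ℝ) / (a.factorial * (b - 1).factorial) := by
      rw [eq_div_iff (by positivity)]
      linear_combination hchoose
    have hcoef : ((m - 1).choose a : ℝ) *
        (((2 * a).factorial : ℝ) * ((2 * b - 1).factorial : ℝ) / ((2 * m).factorial : ℝ))
          / (((a + 1).factorial : ℝ) * (b.factorial : ℝ))
        = ((m - 1).factorial : ℝ) * catalan a * ((((b : ℕ) : ℝ) + 1) * catalan b)
          / (2 * (2 * m).factorial) := by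
      rw [e1, e2, hch, hbsucc, hbfac]
      have nb1 : (b : ℝ) + 1 ≠ 0 := by positivity
      field_simp
    calc ((m - 1).choose a : ℝ) *
          ((((2 * a).factorial : ℝ) * ((2 * b - 1).factorial : ℝ) / ((2 * m).factorial : ℝ))
            * y ^ (2 * m) / (((a + 1).factorial : ℝ) * (b.factorial : ℝ)))
        = (((m - 1).choose a : ℝ) *
            (((2 * a).factorial : ℝ) * ((2 * b - 1).factorial : ℝ) / ((2 * m).factorial : ℝ))
              / (((a + 1).factorial : ℝ) * (b.factorial : ℝ))) * y ^ (2 * m) := by ring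
      _ = _ := by rw [hcoef]
  rw [Finset.sum_congr rfl hterm, ← Finset.sum_mul]
  -- Step 2: the combinatorial sum
  have hsum : ∑ a ∈ Finset.range m,
      (((m - 1).factorial : ℝ) * catalan a * ((((m - a : ℕ) : ℝ) + 1) * catalan (m - a))
        / (2 * (2 * m).factorial))
      = 1 / ((m + 1).factorial : ℝ) := by
    have hS : ∑ a ∈ Finset.range (m + 1),
        (((m - a : ℕ) : ℝ) + 1) * catalan a * catalan (m - a)
        = ((m : ℝ) + 2) * catalan (m + 1) / 2 := by
      have := key1 m
      linarith
    have hsplit : ∑ a ∈ Finset.range (m + 1),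
        (((m - a : ℕ) : ℝ) + 1) * catalan a * catalan (m - a)
        = (∑ a ∈ Finset.range m, (((m - a : ℕ) : ℝ) + 1) * catalan a * catalan (m - a))
          + (catalan m : ℝ) := by
      rw [Finset.sum_range_succ]
      simp [catalan_zero]
    have htrunc : ∑ a ∈ Finset.range m, (((m - a : ℕ) : ℝ) + 1) * catalan a * catalan (m - a)
        = ((m : ℝ) + 2) * catalan (m + 1) / 2 - catalan m := by
      rw [hsplit] at hS; linarith
    have hfactor : ∑ a ∈ Finset.range m,
        (((m - 1).factorial : ℝ) * catalan a * ((((m - a : ℕ) : ℝ) + 1) * catalan (m - a))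
          / (2 * (2 * m).factorial))
        = (((m - 1).factorial : ℝ) / (2 * (2 * m).factorial)) *
            ∑ a ∈ Finset.range m, (((m - a : ℕ) : ℝ) + 1) * catalan a * catalan (m - a) := by
      rw [Finset.mul_sum]
      apply Finset.sum_congr rfl
      intro a _
      ring
    rw [hfactor, htrunc]
    -- final factorial arithmetic
    have hc1 : (catalan (m + 1) : ℝ) * (m + 1).factorial * (m + 2).factorial
        = (2 * (m + 1)).factorial := cat_fact_real (m + 1)
    have hc2 : (catalan m : ℝ) * m.factorial * (m + 1).factorial = (2 * m).factorial :=
      cat_fact_real m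
    have hm1 : (m.factorial : ℝ) = m * ((m - 1).factorial : ℝ) := by
      have : m = (m - 1) + 1 := by omega
      nth_rewrite 1 [this]
      rw [Nat.factorial_succ]
      push_cast [Nat.cast_sub (show 1 ≤ m from hm)]
      ring
    have hm2 : ((m + 1).factorial : ℝ) = (m + 1) * (m.factorial : ℝ) := by
      rw [Nat.factorial_succ]; push_cast; ring
    have hm3 : ((m + 2).factorial : ℝ) = (m + 2) * ((m + 1).factorial : ℝ) := by
      rw [show m + 2 = (m + 1) + 1 by rfl, Nat.factorial_succ]; push_cast; ring
    have h2m2 : ((2 * (m + 1)).factorial : ℝ)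
        = (2 * m + 2) * (2 * m + 1) * ((2 * m).factorial : ℝ) := by
      rw [show 2 * (m + 1) = (2 * m + 1) + 1 by ring, Nat.factorial_succ]
      rw [show 2 * m + 1 = (2 * m) + 1 by rfl, Nat.factorial_succ]
      push_cast; ring
    have nf1 : ((m - 1).factorial : ℝ) ≠ 0 := by positivity
    have nf2 : (m.factorial : ℝ) ≠ 0 := by positivity
    have nf3 : ((m + 1).factorial : ℝ) ≠ 0 := by positivity
    have nf4 : ((2 * m).factorial : ℝ) ≠ 0 := by positivity
    have nfm : (m : ℝ) ≠ 0 := by positivity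
    -- express catalans
    have ec1 : (catalan (m + 1) : ℝ)
        = ((2 * (m + 1)).factorial : ℝ) / ((m + 1).factorial * (m + 2).factorial) := by
      rw [eq_div_iff (by positivity)]; linear_combination hc1
    have ec2 : (catalan m : ℝ) = ((2 * m).factorial : ℝ) / (m.factorial * (m + 1).factorial) := by
      rw [eq_div_iff (by positivity)]; linear_combination hc2
    rw [ec1, ec2, h2m2, hm3, hm2, hm1]
    field_simp
    ring
  rw [hsum]
  ring
end

section
/- For every integer m ≥ 1 and every real number y, one has ∑_{a=0}^{m-1} C(m-1,a) · ∫_0^y x^{2a} (y-x)^{2(m-a-1)} / ((a+1)! · (m-a)!) dx = 2 · y^{2m-1} / (m+1)!. -/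
lemma beta01 (p q : ℕ) : ∫ x in (0:ℝ)..1, x ^ p * (1 - x) ^ q =
    (p.factorial * q.factorial : ℝ) / (p + q + 1).factorial := by
  have h := Complex.Gamma_mul_Gamma_eq_betaIntegral
    (s := (p : ℂ) + 1) (t := (q : ℂ) + 1) (by simp [Complex.add_re]; positivity)
    (by simp [Complex.add_re]; positivity)
  have hbeta : Complex.betaIntegral ((p : ℂ) + 1) ((q : ℂ) + 1) =
      ((∫ x in (0:ℝ)..1, x ^ p * (1 - x) ^ q : ℝ) : ℂ) := by
    rw [Complex.betaIntegral, ← intervalIntegral.integral_ofReal]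
    refine intervalIntegral.integral_congr fun x _ => ?_
    push_cast
    rw [add_sub_cancel_right, add_sub_cancel_right, Complex.cpow_natCast,
      Complex.cpow_natCast]
  have hg1 : Complex.Gamma ((p : ℂ) + 1) = p.factorial := by
    exact_mod_cast Complex.Gamma_nat_eq_factorial p
  have hg2 : Complex.Gamma ((q : ℂ) + 1) = q.factorial := by
    exact_mod_cast Complex.Gamma_nat_eq_factorial q
  have hg3 : Complex.Gamma ((p : ℂ) + 1 + ((q : ℂ) + 1)) = (p + q + 1).factorial := by
    have : (p : ℂ) + 1 + ((q : ℂ) + 1) = ((p + q + 1 : ℕ) : ℂ) + 1 := by push_cast; ring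
    rw [this]
    exact_mod_cast Complex.Gamma_nat_eq_factorial (p + q + 1)
  rw [hg1, hg2, hg3, hbeta] at h
  have := Nat.factorial_pos (p + q + 1)
  field_simp
  rw [mul_comm]; exact_mod_cast h.symm

lemma beta0y (p q : ℕ) (y : ℝ) : ∫ x in (0:ℝ)..y, x ^ p * (y - x) ^ q =
    (p.factorial * q.factorial : ℝ) / (p + q + 1).factorial * y ^ (p + q + 1) := by
  have h := intervalIntegral.smul_integral_comp_mul_left
    (f := fun x => x ^ p * (y - x) ^ q) (a := (0:ℝ)) (b := 1) y
  simp only [mul_zero, mul_one, smul_eq_mul] at h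
  rw [← h]
  have : ∀ x : ℝ, (y * x) ^ p * (y - y * x) ^ q = y ^ p * y ^ q * (x ^ p * (1 - x) ^ q) := by
    intro x
    rw [show y - y * x = y * (1 - x) by ring, mul_pow, mul_pow]; ring
  simp_rw [this]
  rw [intervalIntegral.integral_const_mul, beta01]
  ring

lemma fact_two_mul (a : ℕ) :
    (2 * a).factorial = catalan a * a.factorial * (a + 1).factorial := by
  have h1 : (2 * a).choose a * a.factorial * a.factorial = (2 * a).factorial := by
    have := Nat.choose_mul_factorial_mul_factorial (n := 2 * a) (k := a) (by omega)
    simpa [show 2 * a - a = a by omega] using this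
  have h2 : (a + 1) * catalan a = (2 * a).choose a := by
    rw [succ_mul_catalan_eq_centralBinom, Nat.centralBinom]
  rw [← h1, ← h2, Nat.factorial_succ]
  ring

lemma coef_nat (a b : ℕ) :
    (a + b).choose a * ((2 * a).factorial * (2 * b).factorial) =
      (a + b).factorial * (catalan a * catalan b) *
        ((a + 1).factorial * (b + 1).factorial) := by
  have h3 : (a + b).choose a * a.factorial * b.factorial = (a + b).factorial := by
    have := Nat.choose_mul_factorial_mul_factorial (n := a + b) (k := a) (by omega)
    simpa [show a + b - a = b by omega] using this
  rw [fact_two_mul a, fact_two_mul b, ← h3]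
  ring

lemma key_nat (n : ℕ) :
    n.factorial * catalan (n + 1) * (n + 2).factorial = 2 * (2 * n + 1).factorial := by
  apply Nat.eq_of_mul_eq_mul_left (show 0 < n + 1 by omega)
  have h := fact_two_mul (n + 1)
  have h2 : (2 * (n + 1)).factorial = (2 * n + 2) * (2 * n + 1).factorial := by
    rw [show 2 * (n + 1) = (2 * n + 1) + 1 by ring, Nat.factorial_succ]
  have h3 : (n + 1).factorial = (n + 1) * n.factorial := Nat.factorial_succ n
  calc (n + 1) * (n.factorial * catalan (n + 1) * (n + 2).factorial)
      = catalan (n + 1) * ((n + 1) * n.factorial) * (n + 2).factorial := by ring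
    _ = catalan (n + 1) * (n + 1).factorial * (n + 2).factorial := by rw [h3]
    _ = (2 * (n + 1)).factorial := by rw [h]
    _ = (n + 1) * (2 * (2 * n + 1).factorial) := by rw [h2]; ring

lemma term_real (a b : ℕ) (y : ℝ) :
    ((a + b).choose a : ℝ) *
      (((2 * a).factorial * (2 * b).factorial : ℝ) / (2 * a + 2 * b + 1).factorial *
        y ^ (2 * a + 2 * b + 1) / ((a + 1).factorial * (b + 1).factorial)) =
    (((a + b).factorial * (catalan a * catalan b) : ℕ) : ℝ) / (2 * (a + b) + 1).factorial *
      y ^ (2 * (a + b) + 1) := by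
  have hcoef : ((a + b).choose a : ℝ) * ((2 * a).factorial * (2 * b).factorial) =
      ((a + b).factorial * (catalan a * catalan b) : ℕ) *
        ((a + 1).factorial * (b + 1).factorial) := by
    exact_mod_cast congrArg (Nat.cast (R := ℝ)) (coef_nat a b)
  have he : 2 * a + 2 * b = 2 * (a + b) := by ring
  rw [he]
  have h1 : ((a + 1).factorial : ℝ) ≠ 0 := Nat.cast_ne_zero.mpr (Nat.factorial_ne_zero _)
  have h2 : ((b + 1).factorial : ℝ) ≠ 0 := Nat.cast_ne_zero.mpr (Nat.factorial_ne_zero _)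
  have h3 : ((2 * (a + b) + 1).factorial : ℝ) ≠ 0 :=
    Nat.cast_ne_zero.mpr (Nat.factorial_ne_zero _)
  push_cast at hcoef ⊢
  field_simp
  linear_combination y ^ (2 * (a + b) + 1) * hcoef

/-- Part (2) of Proposition `id`:
`∑_{a=0}^{m-1} C(m-1,a) ∫_0^y x^{2a}(y-x)^{2(m-a-1)}/((a+1)!(m-a)!) dx = 2 y^{2m-1}/(m+1)!`. -/
theorem stmt_1 (m : ℕ) (hm : 1 ≤ m) (y : ℝ) :
    ∑ a ∈ Finset.range m, (Nat.choose (m - 1) a : ℝ) *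
      ∫ x in (0:ℝ)..y,
        x ^ (2 * a) * (y - x) ^ (2 * (m - a - 1)) /
          ((Nat.factorial (a + 1) : ℝ) * (Nat.factorial (m - a) : ℝ)) =
    2 * y ^ (2 * m - 1) / (Nat.factorial (m + 1) : ℝ) := by
  obtain ⟨n, rfl⟩ : ∃ n, m = n + 1 := ⟨m - 1, by omega⟩
  have step : ∀ a ∈ Finset.range (n + 1),
      (Nat.choose (n + 1 - 1) a : ℝ) *
        ∫ x in (0:ℝ)..y,
          x ^ (2 * a) * (y - x) ^ (2 * (n + 1 - a - 1)) /
            ((Nat.factorial (a + 1) : ℝ) * (Nat.factorial (n + 1 - a) : ℝ)) =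
      ((n.factorial * (catalan a * catalan (n - a)) : ℕ) : ℝ) /
        (2 * n + 1).factorial * y ^ (2 * n + 1) := by
    intro a ha
    have haa : a ≤ n := by simpa using Nat.lt_succ_iff.mp (Finset.mem_range.mp ha)
    set b := n - a with hb
    have hab : a + b = n := by omega
    rw [show n + 1 - 1 = n from rfl, show n + 1 - a - 1 = b by omega,
      show n + 1 - a = b + 1 by omega]
    rw [intervalIntegral.integral_div, beta0y]
    rw [← hab]
    exact term_real a b y
  have hcat : (∑ i ∈ Finset.range (n + 1), catalan i * catalan (n - i)) = catalan (n + 1) := by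
    rw [catalan_succ]
    exact (Fin.sum_univ_eq_sum_range (fun i => catalan i * catalan (n - i)) (n + 1)).symm
  rw [Finset.sum_congr rfl step, ← Finset.sum_mul, ← Finset.sum_div, ← Nat.cast_sum,
    ← Finset.mul_sum, hcat]
  have h1 : ((2 * n + 1).factorial : ℝ) ≠ 0 := Nat.cast_ne_zero.mpr (Nat.factorial_ne_zero _)
  have h2 : ((n + 1 + 1).factorial : ℝ) ≠ 0 := Nat.cast_ne_zero.mpr (Nat.factorial_ne_zero _)
  have hkey : ((n.factorial * catalan (n + 1) * (n + 2).factorial : ℕ) : ℝ) =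
      ((2 * (2 * n + 1).factorial : ℕ) : ℝ) := congrArg (Nat.cast (R := ℝ)) (key_nat n)
  push_cast at hkey
  rw [show 2 * (n + 1) - 1 = 2 * n + 1 by omega, show n + 1 + 1 = n + 2 from rfl]
  push_cast
  field_simp
  linear_combination y ^ (2 * n + 1) * hkey
end

section
/- For every integer m ≥ 1 and every real number y, one has ∑_{a=0}^{m-1} C(m-1,a) · ∫_0^y x^{2a} (y-x)^{2(m-a)-1} / ((a+1)! · (m-a)!) dx = (y/2) · ∑_{a=0}^{m-1} C(m-1,a) · ∫_0^y x^{2a} (y-x)^{2(m-a-1)} / ((a+1)! · (m-a)!) dx. -/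
/-- The reduction `I_m = (y/2) · J_m` from the proof of Proposition `id`. -/
theorem stmt_3 (m : ℕ) (hm : 1 ≤ m) (y : ℝ) :
    ∑ a ∈ Finset.range m, (Nat.choose (m - 1) a : ℝ) *
      ∫ x in (0:ℝ)..y,
        x ^ (2 * a) * (y - x) ^ (2 * (m - a) - 1) /
          ((Nat.factorial (a + 1) : ℝ) * (Nat.factorial (m - a) : ℝ)) =
    (y / 2) *
      ∑ a ∈ Finset.range m, (Nat.choose (m - 1) a : ℝ) *
        ∫ x in (0:ℝ)..y,
          x ^ (2 * a) * (y - x) ^ (2 * (m - a - 1)) /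
            ((Nat.factorial (a + 1) : ℝ) * (Nat.factorial (m - a) : ℝ)) := by
  set F : ℕ → ℝ := fun a => ∫ x in (0:ℝ)..y,
      x ^ (2 * a) * (y - x) ^ (2 * (m - a) - 1) /
        ((Nat.factorial (a + 1) : ℝ) * (Nat.factorial (m - a) : ℝ)) with hF
  set G : ℕ → ℝ := fun a => ∫ x in (0:ℝ)..y,
      x ^ (2 * a) * (y - x) ^ (2 * (m - a - 1)) /
        ((Nat.factorial (a + 1) : ℝ) * (Nat.factorial (m - a) : ℝ)) with hG
  set H : ℕ → ℝ := fun a => ∫ x in (0:ℝ)..y,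
      x ^ (2 * a + 1) * (y - x) ^ (2 * (m - a - 1)) /
        ((Nat.factorial (a + 1) : ℝ) * (Nat.factorial (m - a) : ℝ)) with hH
  have hcont : ∀ (p q : ℕ) (c : ℝ),
      IntervalIntegrable (fun x : ℝ => x ^ p * (y - x) ^ q / c)
        MeasureTheory.volume 0 y := by
    intro p q c
    apply Continuous.intervalIntegrable
    fun_prop
  -- Step 1: F a = y * G a - H a for a < m
  have key : ∀ a ∈ Finset.range m, F a = y * G a - H a := by
    intro a ha
    rw [Finset.mem_range] at ha
    rw [hF, hG, hH]
    set c : ℝ := ((Nat.factorial (a + 1) : ℝ) * (Nat.factorial (m - a) : ℝ))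
    rw [← intervalIntegral.integral_const_mul,
      ← intervalIntegral.integral_sub ((hcont (2*a) (2*(m-a-1)) c).const_mul y)
        (hcont (2*a+1) (2*(m-a-1)) c)]
    apply intervalIntegral.integral_congr
    intro x hx
    have h1 : 2 * (m - a) - 1 = 2 * (m - a - 1) + 1 := by omega
    simp only [h1]
    ring
  -- Step 2: substitution x ↦ y - x in H
  have hsub : ∀ a : ℕ, H a = ∫ x in (0:ℝ)..y,
      x ^ (2 * (m - a - 1)) * (y - x) ^ (2 * a + 1) /
        ((Nat.factorial (a + 1) : ℝ) * (Nat.factorial (m - a) : ℝ)) := by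
    intro a
    set c : ℝ := ((Nat.factorial (a + 1) : ℝ) * (Nat.factorial (m - a) : ℝ))
    have := intervalIntegral.integral_comp_sub_left
      (a := (0:ℝ)) (b := y)
      (fun t : ℝ => t ^ (2 * (m - a - 1)) * (y - t) ^ (2 * a + 1) / c) y
    simp only [sub_zero, sub_self] at this
    rw [hH, ← this]
    apply intervalIntegral.integral_congr
    intro x hx
    simp only [sub_sub_cancel]
    ring
  -- Step 3: ∑ C * H = ∑ C * F
  have hHF : ∑ a ∈ Finset.range m, (Nat.choose (m - 1) a : ℝ) * H a
      = ∑ a ∈ Finset.range m, (Nat.choose (m - 1) a : ℝ) * F a := by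
    rw [← Finset.sum_range_reflect (fun a => (Nat.choose (m - 1) a : ℝ) * F a) m]
    apply Finset.sum_congr rfl
    intro a ha
    rw [Finset.mem_range] at ha
    have e0 : Nat.choose (m - 1) (m - 1 - a) = Nat.choose (m - 1) a :=
      Nat.choose_symm (by omega)
    rw [hsub a, hF]
    have e1 : 2 * (m - 1 - a) = 2 * (m - a - 1) := by ring_nf; omega
    have e2 : 2 * (m - (m - 1 - a)) - 1 = 2 * a + 1 := by omega
    have e3 : m - 1 - a + 1 = m - a := by omega
    have e4 : m - (m - 1 - a) = a + 1 := by omega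
    have e5 : 2 * (a + 1) - 1 = 2 * a + 1 := by omega
    simp only [e0, e1, e2, e3, e4, e5]
    congr 1
    apply intervalIntegral.integral_congr
    intro x hx
    ring
  have hsum : ∑ a ∈ Finset.range m, (Nat.choose (m - 1) a : ℝ) * F a
      = y * ∑ a ∈ Finset.range m, (Nat.choose (m - 1) a : ℝ) * G a
        - ∑ a ∈ Finset.range m, (Nat.choose (m - 1) a : ℝ) * F a := by
    nth_rewrite 1 [Finset.sum_congr rfl (fun a ha => by rw [key a ha])]
    rw [← hHF]
    rw [Finset.mul_sum, ← Finset.sum_sub_distrib]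
    apply Finset.sum_congr rfl
    intro a ha
    ring
  linarith [hsum]
end

section
/- Let f : ℝ → ℝ be defined by f(x) = ∑_{m=0}^∞ x^{2m} / (m! · (m+1)!), and for λ > 2 let F(λ) = ∫_0^∞ e^{-λx} f(x) dx (the Laplace transform of f). Then for every real λ > 2, F(λ)² = λ·F(λ) − 1. -/
open MeasureTheory Real Set

lemma intA {r : ℝ} (hr : 0 < r) (n : ℕ) :
    ∫ x in Ioi (0:ℝ), Real.exp (-r * x) * x ^ n = (n.factorial : ℝ) / r ^ (n + 1) := by
  have h := Real.integral_rpow_mul_exp_neg_mul_Ioi (a := (n:ℝ) + 1) (by positivity) hr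
  rw [show ∫ t in Ioi (0:ℝ), t ^ ((n:ℝ) + 1 - 1) * Real.exp (-(r * t))
      = ∫ x in Ioi (0:ℝ), Real.exp (-r * x) * x ^ n from ?_] at h
  · rw [h, Real.Gamma_nat_eq_factorial]
    rw [show ((n:ℝ) + 1) = ((n+1 : ℕ) : ℝ) by push_cast; ring, Real.rpow_natCast]
    field_simp
    rw [← mul_pow, one_div, inv_mul_cancel₀ hr.ne', one_pow]
  · refine setIntegral_congr_fun measurableSet_Ioi (fun t ht => ?_)
    rw [add_sub_cancel_right, Real.rpow_natCast, neg_mul, mul_comm]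

lemma intB {r : ℝ} (hr : 0 < r) (n : ℕ) :
    IntegrableOn (fun x : ℝ => Real.exp (-r * x) * x ^ n) (Ioi 0) := by
  have h := integrableOn_rpow_mul_exp_neg_mul_rpow (s := (n:ℝ)) (p := 1)
    (by exact_mod_cast neg_one_lt_zero.trans_le (Nat.cast_nonneg n)) one_pos hr
  refine h.congr_fun (fun x hx => ?_) measurableSet_Ioi
  beta_reduce
  rw [Real.rpow_one, Real.rpow_natCast, mul_comm]

lemma catC (m : ℕ) :
    ((2 * m).factorial : ℝ) / ((m.factorial : ℝ) * ((m + 1).factorial : ℝ))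
      = (catalan m : ℝ) := by
  have h1 : (2 * m).choose m * m.factorial * m.factorial = (2 * m).factorial := by
    have := Nat.choose_mul_factorial_mul_factorial (show m ≤ 2 * m by omega)
    simpa [two_mul, Nat.sub_eq_iff_eq_add] using this
  have h2 : (m + 1) * catalan m = (2 * m).choose m :=
    (succ_mul_catalan_eq_centralBinom m).trans (Nat.centralBinom_eq_two_mul_choose m)
  have hm : (m.factorial : ℝ) ≠ 0 := Nat.cast_ne_zero.2 m.factorial_ne_zero
  have hm1 : ((m+1).factorial : ℝ) ≠ 0 := Nat.cast_ne_zero.2 (m+1).factorial_ne_zero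
  rw [div_eq_iff (by positivity)]
  rw [Nat.factorial_succ]
  push_cast [← h1, ← h2]
  ring

lemma catD (m : ℕ) : (catalan m : ℝ) ≤ 4 ^ m := by
  have h1 : catalan m ≤ (m + 1) * catalan m := Nat.le_mul_of_pos_left _ m.succ_pos
  have h2 : (m + 1) * catalan m = (2 * m).choose m :=
    (succ_mul_catalan_eq_centralBinom m).trans (Nat.centralBinom_eq_two_mul_choose m)
  have h3 : (2 * m).choose m ≤ (2 * m + 1).choose m := Nat.choose_le_choose m (by omega)
  have := (h1.trans (h2.le.trans (h3.trans (Nat.choose_middle_le_pow m))))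
  exact_mod_cast this

lemma sumE {t : ℝ} (ht : 0 < t) (ht2 : t < 1/2) :
    Summable (fun m : ℕ => (catalan m : ℝ) * t ^ (2 * m + 1)) := by
  apply Summable.of_nonneg_of_le (fun m => by positivity)
    (fun m => ?_) (((summable_geometric_of_lt_one (by positivity)
      (by nlinarith : 4 * t ^ 2 < 1)).mul_left t))
  calc (catalan m : ℝ) * t ^ (2 * m + 1) ≤ 4 ^ m * t ^ (2 * m + 1) := by
        gcongr; exact catD m
    _ = t * (4 * t ^ 2) ^ m := by rw [mul_pow, pow_add, pow_mul]; ring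

lemma Fser {l : ℝ} (hl : 2 < l) :
    ∫ x in Ioi (0:ℝ), Real.exp (-l * x) *
        ∑' m : ℕ, x ^ (2 * m) / ((Nat.factorial m : ℝ) * (Nat.factorial (m + 1) : ℝ))
      = ∑' m : ℕ, (catalan m : ℝ) * l⁻¹ ^ (2 * m + 1) := by
  have hl0 : 0 < l := by linarith
  have ht : 0 < l⁻¹ := by positivity
  have ht2 : l⁻¹ < 1/2 := by
    have h1 : l⁻¹ * l = 1 := inv_mul_cancel₀ (ne_of_gt hl0)
    nlinarith
  have hval : ∀ m : ℕ, ∫ x in Ioi (0:ℝ),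
      Real.exp (-l * x) * x ^ (2 * m) / ((Nat.factorial m : ℝ) * (Nat.factorial (m + 1) : ℝ))
      = (catalan m : ℝ) * l⁻¹ ^ (2 * m + 1) := by
    intro m
    rw [integral_div, intA hl0 (2 * m), div_div, mul_comm (l ^ (2 * m + 1)), ← div_div,
      catC, inv_pow, div_eq_mul_inv]
  have hint : ∀ m : ℕ, IntegrableOn (fun x : ℝ =>
      Real.exp (-l * x) * x ^ (2 * m) / ((Nat.factorial m : ℝ) * (Nat.factorial (m + 1) : ℝ)))
      (Ioi 0) := fun m => (intB hl0 (2 * m)).div_const _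
  simp_rw [← tsum_mul_left, mul_div_assoc' (Real.exp _)]
  rw [MeasureTheory.integral_tsum]
  · exact tsum_congr fun m => hval m
  · intro m
    exact ((Continuous.div_const (by continuity) _).aestronglyMeasurable).restrict
  · have key : ∀ m : ℕ, (∫⁻ x, ‖Real.exp (-l * x) * x ^ (2 * m) /
        ((Nat.factorial m : ℝ) * (Nat.factorial (m + 1) : ℝ))‖ₑ ∂(volume.restrict (Ioi 0)))
        = ENNReal.ofReal ((catalan m : ℝ) * l⁻¹ ^ (2 * m + 1)) := by
      intro m
      have hnn : ∀ x : ℝ, 0 ≤ Real.exp (-l * x) * x ^ (2 * m) /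
          ((Nat.factorial m : ℝ) * (Nat.factorial (m + 1) : ℝ)) := fun x =>
        div_nonneg (mul_nonneg (Real.exp_pos _).le ((even_two_mul m).pow_nonneg x))
          (by positivity)
      rw [lintegral_congr (fun x => Real.enorm_eq_ofReal (hnn x)),
        ← ofReal_integral_eq_lintegral_ofReal (hint m) (Filter.Eventually.of_forall hnn),
        hval m]
    simp_rw [key]
    rw [← ENNReal.ofReal_tsum_of_nonneg (fun m => by positivity) (sumE ht ht2)]
    exact ENNReal.ofReal_ne_top

lemma quadratic {t : ℝ} (ht : 0 < t) (ht2 : t < 1/2) :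
    (∑' m : ℕ, (catalan m : ℝ) * t ^ (2 * m + 1)) ^ 2
      = t⁻¹ * (∑' m : ℕ, (catalan m : ℝ) * t ^ (2 * m + 1)) - 1 := by
  set h : ℕ → ℝ := fun m => (catalan m : ℝ) * t ^ (2 * m + 1) with hh
  have hsum : Summable h := sumE ht ht2
  have hnorm : Summable fun m => ‖h m‖ := by
    refine hsum.congr fun m => ?_
    rw [Real.norm_eq_abs, abs_of_nonneg (by positivity)]
  have hG : Summable (fun m : ℕ => (catalan m : ℝ) * t ^ (2 * m)) := by
    refine (hsum.mul_left t⁻¹).congr fun m => ?_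
    rw [hh]
    field_simp
    ring
  have cauchy := tsum_mul_tsum_eq_tsum_sum_antidiagonal_of_summable_norm hnorm hnorm
  have inner : ∀ n : ℕ, ∑ kl ∈ Finset.HasAntidiagonal.antidiagonal n, h kl.1 * h kl.2
      = (catalan (n + 1) : ℝ) * t ^ (2 * (n + 1)) := by
    intro n
    have : ∀ kl ∈ Finset.HasAntidiagonal.antidiagonal n, h kl.1 * h kl.2
        = ((catalan kl.1 * catalan kl.2 : ℕ) : ℝ) * t ^ (2 * (n + 1)) := by
      intro kl hkl
      have hn := Finset.HasAntidiagonal.mem_antidiagonal.1 hkl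
      rw [hh]
      push_cast
      rw [show (2 * (n+1)) = (2 * kl.1 + 1) + (2 * kl.2 + 1) by omega, pow_add]
      ring
    rw [Finset.sum_congr rfl this, ← Finset.sum_mul, ← Nat.cast_sum, ← catalan_succ']
  have lhs : (∑' m, h m) ^ 2 = ∑' n : ℕ, (catalan (n + 1) : ℝ) * t ^ (2 * (n + 1)) := by
    rw [sq, cauchy]
    exact tsum_congr inner
  have rhs : t⁻¹ * (∑' m, h m) - 1
      = ∑' n : ℕ, (catalan (n + 1) : ℝ) * t ^ (2 * (n + 1)) := by
    have h1 : t⁻¹ * (∑' m, h m) = ∑' m : ℕ, (catalan m : ℝ) * t ^ (2 * m) := by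
      rw [← tsum_mul_left]
      refine tsum_congr fun m => ?_
      rw [hh]
      field_simp
      ring
    rw [h1, Summable.tsum_eq_zero_add hG]
    simp [catalan_zero]
  rw [lhs, rhs]

/-- The quadratic functional equation `F(λ)² = λF(λ) − 1` for the Laplace transform of
`f(x) = ∑ x^{2m}/(m!(m+1)!)`. -/
theorem stmt_5 (f : ℝ → ℝ)
    (hf : ∀ x : ℝ, f x =
      ∑' m : ℕ, x ^ (2 * m) / ((Nat.factorial m : ℝ) * (Nat.factorial (m + 1) : ℝ)))
    (F : ℝ → ℝ)
    (hF : ∀ l : ℝ, 2 < l → F l = ∫ x in Set.Ioi (0:ℝ), Real.exp (-l * x) * f x)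
    (l : ℝ) (hl : 2 < l) :
    F l ^ 2 = l * F l - 1 := by
  have hl0 : 0 < l := by linarith
  have ht : 0 < l⁻¹ := by positivity
  have ht2 : l⁻¹ < 1/2 := by
    have h1 : l⁻¹ * l = 1 := inv_mul_cancel₀ (ne_of_gt hl0)
    nlinarith
  have hFl : F l = ∑' m : ℕ, (catalan m : ℝ) * l⁻¹ ^ (2 * m + 1) := by
    rw [hF l hl]
    simp_rw [hf]
    exact Fser hl
  rw [hFl]
  have := quadratic ht ht2
  rw [inv_inv] at this
  exact this
end

section
/- Let f : ℝ → ℝ be defined by f(x) = ∑_{m=0}^∞ x^{2m} / (m! · (m+1)!). Then for every real number λ > 2, ∫_0^∞ e^{-λx} f(x) dx = λ·(1 − √(1 − 4·λ^{-2}))/2. -/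
open Real MeasureTheory Set

/-- `catalan n * (n! * (n+1)!) = (2n)!` in `ℕ`. -/
lemma aux_cat_nat (n : ℕ) :
    catalan n * (n.factorial * (n + 1).factorial) = (2 * n).factorial := by
  have h1 := succ_mul_catalan_eq_centralBinom n
  have h2 : Nat.centralBinom n * n.factorial * n.factorial = (2 * n).factorial := by
    have := Nat.choose_mul_factorial_mul_factorial (show n ≤ 2 * n by omega)
    simpa [Nat.centralBinom, show 2 * n - n = n by omega] using this
  calc catalan n * (n.factorial * (n + 1).factorial)
      = ((n + 1) * catalan n) * n.factorial * n.factorial := by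
        rw [Nat.factorial_succ]; ring
    _ = Nat.centralBinom n * n.factorial * n.factorial := by rw [h1]
    _ = (2 * n).factorial := h2

lemma aux_cat_le (n : ℕ) : catalan n ≤ 4 ^ n := by
  have h1 : catalan n ≤ Nat.centralBinom n := by
    have := succ_mul_catalan_eq_centralBinom n
    nlinarith [catalan n, Nat.centralBinom n]
  have h2 : Nat.centralBinom n ≤ 4 ^ n := by
    calc Nat.centralBinom n = (2 * n).choose n := rfl
      _ ≤ (2 * n + 1).choose n := Nat.choose_le_choose n (by omega)
      _ ≤ 4 ^ n := Nat.choose_middle_le_pow n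
  omega

lemma aux_integrable_pow_exp (n : ℕ) {r : ℝ} (hr : 0 < r) :
    IntegrableOn (fun x : ℝ => x ^ n * Real.exp (-r * x)) (Ioi (0 : ℝ)) := by
  have h := integrableOn_rpow_mul_exp_neg_mul_rpow
    (s := (n : ℝ)) (p := 1) (b := r) (by linarith [Nat.cast_nonneg (α := ℝ) n]) one_pos hr
  refine h.congr_fun (fun x hx => ?_) measurableSet_Ioi
  beta_reduce
  rw [Real.rpow_one, Real.rpow_natCast]

lemma aux_integral_pow_exp (n : ℕ) {r : ℝ} (hr : 0 < r) :
    ∫ x in Ioi (0 : ℝ), x ^ n * Real.exp (-r * x) = n.factorial / r ^ (n + 1) := by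
  have h := integral_rpow_mul_exp_neg_mul_Ioi (a := (n : ℝ) + 1) (by positivity) hr
  have h1 : ∀ x ∈ Ioi (0 : ℝ), x ^ ((n : ℝ) + 1 - 1) * Real.exp (-(r * x))
      = x ^ n * Real.exp (-r * x) := by
    intro x hx
    rw [add_sub_cancel_right, Real.rpow_natCast, neg_mul]
  rw [setIntegral_congr_fun measurableSet_Ioi h1] at h
  rw [h, Real.Gamma_nat_eq_factorial]
  have : ((n : ℝ) + 1) = ((n + 1 : ℕ) : ℝ) := by push_cast; ring
  rw [this, Real.rpow_natCast]
  rw [div_pow, one_pow, div_mul_eq_mul_div, one_mul]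

/-- summability of the Catalan series for `0 ≤ t < 1/4` (with uniform bound). -/
lemma aux_summable_cat {t : ℝ} (h0 : 0 ≤ t) (h4 : t < 1 / 4) :
    Summable (fun n : ℕ => (catalan n : ℝ) * t ^ n) := by
  refine Summable.of_nonneg_of_le (fun n => by positivity) (fun n => ?_)
    (summable_geometric_of_lt_one (by positivity) (by linarith : 4 * t < 1))
  calc (catalan n : ℝ) * t ^ n ≤ (4 ^ n : ℝ) * t ^ n := by
        gcongr
        exact_mod_cast aux_cat_le n
    _ = (4 * t) ^ n := by rw [mul_pow]

set_option maxHeartbeats 1000000 in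
/-- The functional equation `t * g t ^ 2 = g t - 1`. -/
lemma aux_fe {t : ℝ} (h0 : 0 ≤ t) (h4 : t < 1 / 4) :
    t * (∑' n : ℕ, (catalan n : ℝ) * t ^ n) ^ 2
      = (∑' n : ℕ, (catalan n : ℝ) * t ^ n) - 1 := by
  have hs : Summable (fun n : ℕ => (catalan n : ℝ) * t ^ n) := aux_summable_cat h0 h4
  have hsn : Summable (fun n : ℕ => ‖(catalan n : ℝ) * t ^ n‖) := by
    refine hs.abs.congr (fun n => ?_)
    rw [Real.norm_eq_abs]
  have hc := tsum_mul_tsum_eq_tsum_sum_antidiagonal_of_summable_norm hsn hsn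
  have hinner : ∀ n : ℕ, (∑ kl ∈ Finset.HasAntidiagonal.antidiagonal n,
      ((catalan kl.1 : ℝ) * t ^ kl.1) * ((catalan kl.2 : ℝ) * t ^ kl.2))
      = (catalan (n + 1) : ℝ) * t ^ n := by
    intro n
    rw [catalan_succ' n]
    push_cast
    rw [Finset.sum_mul]
    refine Finset.sum_congr rfl (fun kl hkl => ?_)
    have : kl.1 + kl.2 = n := Finset.HasAntidiagonal.mem_antidiagonal.mp hkl
    rw [← this, pow_add]
    ring
  simp only [hinner] at hc
  have hs1 : Summable (fun n : ℕ => (catalan (n + 1) : ℝ) * t ^ (n + 1)) :=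
    (summable_nat_add_iff 1).mpr hs
  have key : t * (∑' n : ℕ, (catalan n : ℝ) * t ^ n) ^ 2
      = ∑' n : ℕ, (catalan (n + 1) : ℝ) * t ^ (n + 1) := by
    rw [sq, hc, ← tsum_mul_left]
    exact tsum_congr (fun n => by ring)
  rw [key, Summable.tsum_eq_zero_add hs]
  simp [catalan_zero]

lemma aux_sign {t : ℝ} (h0 : 0 ≤ t) (h4 : t < 1 / 4) :
    2 * t * (∑' n : ℕ, (catalan n : ℝ) * t ^ n) - 1 < 0 := by
  set h : ℝ → ℝ := fun s => 2 * s * (∑' n : ℕ, (catalan n : ℝ) * s ^ n) - 1 with hh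
  have hsq : ∀ s : ℝ, 0 ≤ s → s < 1 / 4 → (h s) ^ 2 = 1 - 4 * s := by
    intro s hs0 hs4
    have fe := aux_fe hs0 hs4
    simp only [hh]
    linear_combination 4 * s * fe
  have hcont : ContinuousOn h (Icc 0 t) := by
    have hg : ContinuousOn (fun s : ℝ => ∑' n : ℕ, (catalan n : ℝ) * s ^ n) (Icc 0 t) := by
      refine continuousOn_tsum (u := fun n => (4 * t) ^ n)
        (fun n => (Continuous.continuousOn (by continuity)))
        (summable_geometric_of_lt_one (by positivity) (by linarith)) ?_
      intro n x hx
      obtain ⟨hx0, hxt⟩ := hx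
      rw [Real.norm_eq_abs, abs_of_nonneg (by positivity)]
      calc (catalan n : ℝ) * x ^ n ≤ (4 ^ n : ℝ) * t ^ n := by
            gcongr
            · exact_mod_cast aux_cat_le n
        _ = (4 * t) ^ n := by rw [mul_pow]
    exact (((continuousOn_const.mul continuousOn_id).mul hg).sub continuousOn_const)
  have hne : ∀ s ∈ Icc (0:ℝ) t, h s ≠ 0 := by
    intro s hsm
    obtain ⟨hs0, hst⟩ := hsm
    have := hsq s hs0 (by linarith)
    intro hzero
    rw [hzero] at this
    simp at this
    linarith
  have h0v : h 0 = -1 := by simp [hh]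
  by_contra hcon
  push_neg at hcon
  have hpos : 0 < h t := lt_of_le_of_ne (by simpa [hh] using hcon) (Ne.symm (hne t ⟨h0, le_refl t⟩))
  have := intermediate_value_Icc h0 hcont
  have hmem : (0:ℝ) ∈ Icc (h 0) (h t) := by
    rw [h0v]; exact ⟨by norm_num, hpos.le⟩
  obtain ⟨s, hsm, hs0⟩ := this hmem
  exact hne s hsm hs0

lemma aux_gf {t : ℝ} (h0 : 0 ≤ t) (h4 : t < 1 / 4) :
    Real.sqrt (1 - 4 * t) = 1 - 2 * t * (∑' n : ℕ, (catalan n : ℝ) * t ^ n) := by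
  have fe := aux_fe h0 h4
  have hsq : (1 - 2 * t * (∑' n : ℕ, (catalan n : ℝ) * t ^ n)) ^ 2 = 1 - 4 * t := by
    linear_combination 4 * t * fe
  rw [← hsq, Real.sqrt_sq (by linarith [aux_sign h0 h4])]

/-- Explicit computation of the Laplace transform of `f(x) = ∑ x^{2m}/(m!(m+1)!)`:
`∫_0^∞ e^{-λx} f(x) dx = λ(1 − √(1 − 4λ^{-2}))/2` for `λ > 2`. -/
theorem stmt_7 (f : ℝ → ℝ)
    (hf : ∀ x : ℝ, f x =
      ∑' m : ℕ, x ^ (2 * m) / ((Nat.factorial m : ℝ) * (Nat.factorial (m + 1) : ℝ)))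
    (l : ℝ) (hl : 2 < l) :
    (∫ x in Set.Ioi (0:ℝ), Real.exp (-l * x) * f x) =
      l * (1 - Real.sqrt (1 - 4 * (1 / l) ^ 2)) / 2 := by
  have hl0 : 0 < l := by linarith
  set q : ℝ := (1 / l) ^ 2 with hq
  have hq0 : 0 ≤ q := by positivity
  have hq4 : q < 1 / 4 := by
    rw [hq, div_pow, one_pow, div_lt_div_iff₀ (by positivity) (by norm_num)]
    nlinarith
  set F : ℕ → ℝ → ℝ := fun m x =>
    Real.exp (-l * x) * (x ^ (2 * m) / ((m.factorial : ℝ) * ((m + 1).factorial : ℝ))) with hF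
  have hstep : (∫ x in Set.Ioi (0:ℝ), Real.exp (-l * x) * f x)
      = ∫ x in Set.Ioi (0:ℝ), ∑' m : ℕ, F m x := by
    refine integral_congr_ae (Filter.Eventually.of_forall (fun x => ?_))
    show Real.exp (-l * x) * f x = ∑' m : ℕ, F m x
    simp only [hF]
    rw [hf x, ← tsum_mul_left]
  have hint : ∀ m : ℕ, Integrable (F m) (volume.restrict (Ioi 0)) := by
    intro m
    have heq : F m = fun x : ℝ =>
        (1 / ((m.factorial : ℝ) * ((m + 1).factorial : ℝ))) * (x ^ (2 * m) * Real.exp (-l * x)) := by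
      funext x; simp only [hF]; ring
    rw [heq]
    exact (aux_integrable_pow_exp (2 * m) hl0).const_mul _
  have hval : ∀ m : ℕ, (∫ x in Set.Ioi (0:ℝ), F m x) = (1 / l) * ((catalan m : ℝ) * q ^ m) := by
    intro m
    have h1 : (∫ x in Set.Ioi (0:ℝ), F m x)
        = (1 / ((m.factorial : ℝ) * ((m + 1).factorial : ℝ)))
          * ∫ x in Set.Ioi (0:ℝ), x ^ (2 * m) * Real.exp (-l * x) := by
      rw [← integral_const_mul]
      refine integral_congr_ae (Filter.Eventually.of_forall (fun x => ?_))
      simp only [hF]; ring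
    rw [h1, aux_integral_pow_exp (2 * m) hl0]
    have hc : (((2 * m).factorial : ℝ)) = (catalan m : ℝ)
        * ((m.factorial : ℝ) * ((m + 1).factorial : ℝ)) := by
      exact_mod_cast (aux_cat_nat m).symm
    rw [hc, hq]
    have hm1 : (m.factorial : ℝ) ≠ 0 := by positivity
    have hm2 : ((m + 1).factorial : ℝ) ≠ 0 := by positivity
    have hl' : l ≠ 0 := ne_of_gt hl0
    field_simp
    ring_nf
    rw [mul_assoc _ (l ^ (m * 2)), ← mul_pow, mul_inv_cancel₀ hl', one_pow, mul_one]
  have hnorm : ∀ m : ℕ, (∫ x in Set.Ioi (0:ℝ), ‖F m x‖)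
      = (1 / l) * ((catalan m : ℝ) * q ^ m) := by
    intro m
    rw [← hval m]
    refine setIntegral_congr_fun measurableSet_Ioi (fun x hx => ?_)
    rw [Real.norm_eq_abs, abs_of_nonneg]
    simp only [hF]
    have hx0 : (0:ℝ) ≤ x := (le_of_lt hx)
    positivity
  have hsum : Summable (fun m : ℕ => ∫ x in Set.Ioi (0:ℝ), ‖F m x‖) := by
    refine Summable.congr ?_ (fun m => (hnorm m).symm)
    exact (aux_summable_cat hq0 hq4).mul_left _
  rw [hstep, ← integral_tsum_of_summable_integral_norm hint hsum, tsum_congr hval,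
    tsum_mul_left, aux_gf hq0 hq4]
  rw [hq]
  field_simp
  ring
end

section
/- Let V be a vector space over ℝ, let m be a natural number, and let x_1, …, x_{2m+1} be elements of V. In the exterior algebra Λ(V), with ι : V → Λ(V) the canonical inclusion, one has (∑_{i=1}^{2m+1} ι(x_i)) · (∑_{1 ≤ i < j ≤ 2m+1} ι(x_i)·ι(x_j))^m = m! • (ι(x_1)·ι(x_2)·⋯·ι(x_{2m+1})), where the product on the right is taken in the order x_1, x_2, …, x_{2m+1}. -/
open ExteriorAlgebra

section Aux

variable {V : Type*} [AddCommGroup V] [Module ℝ V]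

local notation "ιι" => ExteriorAlgebra.ι ℝ (M := V)

lemma swap_iota (u v : V) : ιι u * ιι v = -(ιι v * ιι u) :=
  eq_neg_of_add_eq_zero_left (ExteriorAlgebra.ι_add_mul_swap u v)

lemma central_pair (u v : V) (z : ExteriorAlgebra ℝ V) :
    Commute (ιι u * ιι v) z := by
  induction z using ExteriorAlgebra.induction with
  | algebraMap r => exact (Algebra.commutes r _).symm
  | ι w =>
    show _ = _
    rw [mul_assoc, swap_iota v w, mul_neg, ← mul_assoc, swap_iota u w, neg_mul,
      neg_neg, mul_assoc]
  | mul a b ha hb => exact ha.mul_right hb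
  | add a b ha hb => exact ha.add_right hb

/-- `Om l = ∑_{i<j} ι lᵢ * ι lⱼ`, defined recursively. -/
noncomputable def Om : List V → ExteriorAlgebra ℝ V
  | [] => 0
  | a :: l => ιι a * ιι l.sum + Om l

lemma om_central (l : List V) (z : ExteriorAlgebra ℝ V) : Commute (Om l) z := by
  induction l with
  | nil => simpa [Om] using Commute.zero_left z
  | cons a l ih => exact (central_pair a l.sum z).add_left ih

lemma binom_sq_zero {R : Type*} [Ring R] (x e : R) (h : Commute x e) (he : e * e = 0) :
    ∀ n : ℕ, (x + e) ^ (n + 1) = x ^ (n + 1) + (n + 1) • (x ^ n * e) := by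
  intro n
  induction n with
  | zero => simp
  | succ n ih =>
    rw [pow_succ, ih]
    have hex : e * x = x * e := h.symm
    rw [add_mul, mul_add, mul_add, smul_mul_assoc, smul_mul_assoc]
    rw [mul_assoc (x ^ n) e e, he, mul_zero, smul_zero, add_zero]
    rw [mul_assoc (x ^ n) e x, hex, ← mul_assoc (x ^ n) x e, ← pow_succ]
    rw [← pow_succ, succ_nsmul (x ^ (n + 1) * e) (n + 1)]
    abel

set_option maxHeartbeats 1000000 in
lemma key (m : ℕ) : ∀ l : List V, l.length = 2 * m + 1 →
    ιι l.sum * (Om l) ^ m = m.factorial • (l.map ιι).prod ∧ (Om l) ^ (m + 1) = 0 := by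
  induction m with
  | zero =>
    rintro (_ | ⟨a, (_ | ⟨b, l⟩)⟩) h <;> simp_all [Om]
  | succ m ih =>
    rintro (_ | ⟨a, (_ | ⟨b, l⟩)⟩) h
    · simp at h
    · simp at h
    · have hl : l.length = 2 * m + 1 := by simp at h; omega
      obtain ⟨ih1, ih2⟩ := ih l hl
      set A := ιι a with hA
      set B := ιι b with hB
      set T := ιι l.sum with hT
      set P := (l.map ιι).prod with hP
      set Ω := Om l with hΩ
      have sAB : A * B = -(B * A) := swap_iota a b
      have sAT : A * T = -(T * A) := swap_iota a l.sum
      have sBT : B * T = -(T * B) := swap_iota b l.sum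
      have sBA : B * A = -(A * B) := by rw [sAB, neg_neg]
      have sTA : T * A = -(A * T) := by rw [sAT, neg_neg]
      have sTB : T * B = -(B * T) := by rw [sBT, neg_neg]
      have qA : A * A = 0 := ι_sq_zero a
      have qB : B * B = 0 := ι_sq_zero b
      have qT : T * T = 0 := ι_sq_zero l.sum
      set E := A * B + A * T + B * T with hE
      have hOm : Om (a :: b :: l) = Ω + E := by
        show A * ιι (b + l.sum) + (B * T + Ω) = _
        rw [map_add, hE]
        noncomm_ring
      have hsum : ιι (a :: b :: l).sum = A + B + T := by
        show ιι (a + (b + l.sum)) = _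
        rw [map_add, map_add, ← hA, ← hB, ← hT, add_assoc]
      have hEsq : E * E = 0 := by
        rw [hE]
        have h1 : A * B * (A * B) = 0 := by
          calc A * B * (A * B) = A * (B * A) * B := by noncomm_ring
            _ = A * (-(A * B)) * B := by rw [sBA]
            _ = -(A * A * B * B) := by noncomm_ring
            _ = 0 := by rw [qA]; noncomm_ring
        have h2 : A * B * (A * T) = 0 := by
          calc A * B * (A * T) = A * (B * A) * T := by noncomm_ring
            _ = A * (-(A * B)) * T := by rw [sBA]
            _ = -(A * A * B * T) := by noncomm_ring
            _ = 0 := by rw [qA]; noncomm_ring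
        have h3 : A * T * (A * B) = 0 := by
          calc A * T * (A * B) = A * (T * A) * B := by noncomm_ring
            _ = A * (-(A * T)) * B := by rw [sTA]
            _ = -(A * A * T * B) := by noncomm_ring
            _ = 0 := by rw [qA]; noncomm_ring
        have h4 : A * B * (B * T) = 0 := by
          calc A * B * (B * T) = A * (B * B) * T := by noncomm_ring
            _ = 0 := by rw [qB]; noncomm_ring
        have h5 : B * T * (A * B) = 0 := by
          calc B * T * (A * B) = B * (T * A) * B := by noncomm_ring
            _ = B * (-(A * T)) * B := by rw [sTA]
            _ = -(B * A * (T * B)) := by noncomm_ring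
            _ = -(B * A * (-(B * T))) := by rw [sTB]
            _ = B * A * B * T := by rw [mul_neg, neg_neg, ← mul_assoc]
            _ = -(A * B) * B * T := by rw [sBA]
            _ = -(A * (B * B) * T) := by noncomm_ring
            _ = 0 := by rw [qB]; noncomm_ring
        have h6 : A * T * (A * T) = 0 := by
          calc A * T * (A * T) = A * (T * A) * T := by noncomm_ring
            _ = A * (-(A * T)) * T := by rw [sTA]
            _ = -(A * A * T * T) := by noncomm_ring
            _ = 0 := by rw [qA]; noncomm_ring
        have h7 : A * T * (B * T) = 0 := by
          calc A * T * (B * T) = A * (T * B) * T := by noncomm_ring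
            _ = A * (-(B * T)) * T := by rw [sTB]
            _ = -(A * B * (T * T)) := by noncomm_ring
            _ = 0 := by rw [qT]; noncomm_ring
        have h8 : B * T * (A * T) = 0 := by
          calc B * T * (A * T) = B * (T * A) * T := by noncomm_ring
            _ = B * (-(A * T)) * T := by rw [sTA]
            _ = -(B * A * (T * T)) := by noncomm_ring
            _ = 0 := by rw [qT]; noncomm_ring
        have h9 : B * T * (B * T) = 0 := by
          calc B * T * (B * T) = B * (T * B) * T := by noncomm_ring
            _ = B * (-(B * T)) * T := by rw [sTB]
            _ = -(B * B * T * T) := by noncomm_ring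
            _ = 0 := by rw [qB]; noncomm_ring
        calc (A*B + A*T + B*T) * (A*B + A*T + B*T)
            = A*B*(A*B) + A*B*(A*T) + A*B*(B*T) + A*T*(A*B) + A*T*(A*T) + A*T*(B*T)
              + B*T*(A*B) + B*T*(A*T) + B*T*(B*T) := by noncomm_ring
          _ = 0 := by rw [h1,h2,h3,h4,h5,h6,h7,h8,h9]; simp
      have hcomm : Commute Ω E := om_central l E
      have hbin := binom_sq_zero Ω E hcomm hEsq
      constructor
      · rw [hsum, hOm, hbin m, mul_add, mul_smul_comm]
        have hΩ1 : (A + B + T) * Ω ^ (m + 1) = 0 := by rw [ih2, mul_zero]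
        rw [hΩ1, zero_add]
        have hc0 : Ω ^ m * (A + B + T) = (A + B + T) * Ω ^ m :=
          ((om_central l (A + B + T)).pow_left m).eq
        have hc : (A + B + T) * (Ω ^ m * E) = Ω ^ m * ((A + B + T) * E) := by
          rw [← mul_assoc, ← hc0, mul_assoc]
        rw [hc]
        have hX : (A + B + T) * E = A * B * T := by
          rw [hE]
          have e1 : A * (A * B) = 0 := by
            rw [← mul_assoc, qA, zero_mul]
          have e2 : A * (A * T) = 0 := by
            rw [← mul_assoc, qA, zero_mul]
          have e3 : B * (A * B) = 0 := by
            calc B * (A * B) = (B * A) * B := by noncomm_ring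
              _ = -(A * B) * B := by rw [sBA]
              _ = -(A * (B * B)) := by noncomm_ring
              _ = 0 := by rw [qB]; noncomm_ring
          have e4 : B * (A * T) = -(A * B * T) := by
            calc B * (A * T) = (B * A) * T := by noncomm_ring
              _ = -(A * B) * T := by rw [sBA]
              _ = -(A * B * T) := by noncomm_ring
          have e5 : B * (B * T) = 0 := by
            rw [← mul_assoc, qB, zero_mul]
          have e6 : T * (A * B) = A * B * T := by
            calc T * (A * B) = (T * A) * B := by noncomm_ring
              _ = -(A * T) * B := by rw [sTA]
              _ = -(A * (T * B)) := by noncomm_ring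
              _ = -(A * (-(B * T))) := by rw [sTB]
              _ = A * B * T := by rw [mul_neg, neg_neg, ← mul_assoc]
          have e7 : T * (A * T) = 0 := by
            calc T * (A * T) = (T * A) * T := by noncomm_ring
              _ = -(A * T) * T := by rw [sTA]
              _ = -(A * (T * T)) := by noncomm_ring
              _ = 0 := by rw [qT]; noncomm_ring
          have e8 : T * (B * T) = 0 := by
            calc T * (B * T) = (T * B) * T := by noncomm_ring
              _ = -(B * T) * T := by rw [sTB]
              _ = -(B * (T * T)) := by noncomm_ring
              _ = 0 := by rw [qT]; noncomm_ring
          calc (A + B + T) * (A*B + A*T + B*T)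
              = A*(A*B) + A*(A*T) + A*(B*T) + B*(A*B) + B*(A*T) + B*(B*T)
                + T*(A*B) + T*(A*T) + T*(B*T) := by noncomm_ring
            _ = A * B * T := by rw [e1,e2,e3,e4,e5,e6,e7,e8]; noncomm_ring
        rw [hX]
        have hfin : Ω ^ m * (A * B * T) = A * (B * (T * Ω ^ m)) := by
          have c : Ω ^ m * (A * B * T) = A * B * T * Ω ^ m :=
            ((om_central l (A * B * T)).pow_left m).eq
          rw [c]; noncomm_ring
        rw [hfin, ih1]
        show _ = (m+1).factorial • (A * (B * P))
        rw [Nat.factorial_succ, mul_smul_comm, mul_smul_comm, smul_smul]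
      · rw [hOm, hbin (m + 1)]
        rw [pow_succ Ω (m+1), ih2, zero_mul, zero_add, zero_mul, smul_zero]

lemma om_ofFn : ∀ (n : ℕ) (f : Fin n → V),
    Om (List.ofFn f) = ∑ i, ∑ j ∈ Finset.Ioi i, ιι (f i) * ιι (f j) := by
  intro n
  induction n with
  | zero => intro f; simp [Om]
  | succ n ih =>
    intro f
    rw [List.ofFn_succ]
    show ιι (f 0) * ιι (List.ofFn (f ∘ Fin.succ)).sum + Om (List.ofFn (f ∘ Fin.succ)) = _
    rw [Fin.sum_univ_succ, ih]
    congr 1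
    · rw [Fin.sum_Ioi_zero, List.sum_ofFn, map_sum, Finset.mul_sum]
      rfl
    · apply Finset.sum_congr rfl
      intro i _
      rw [Fin.sum_Ioi_succ]
      rfl

end Aux

/-- The exterior-algebra identity
`(∑ ι xᵢ) · (∑_{i<j} ι xᵢ · ι xⱼ)^m = m! • (ι x₁ · ⋯ · ι x_{2m+1})`
used in the proof of the power-of-2 lemma. -/
theorem stmt_9 (V : Type*) [AddCommGroup V] [Module ℝ V] (m : ℕ)
    (x : Fin (2 * m + 1) → V) :
    (∑ i, ExteriorAlgebra.ι ℝ (x i)) *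
        (∑ i, ∑ j ∈ Finset.Ioi i,
          ExteriorAlgebra.ι ℝ (x i) * ExteriorAlgebra.ι ℝ (x j)) ^ m =
      Nat.factorial m • (List.ofFn fun i => ExteriorAlgebra.ι ℝ (x i)).prod := by
  have h := key m (List.ofFn x) (by simp)
  rw [← om_ofFn]
  have hs : (∑ i, ExteriorAlgebra.ι ℝ (x i)) = ExteriorAlgebra.ι ℝ (List.ofFn x).sum := by
    rw [List.sum_ofFn, map_sum]
  rw [hs, h.1]
  congr 1
  rw [List.map_ofFn]
  rfl
end
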